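/- The bilinear product ∗ on the free ℤ-module spanned by trees, defined by | ∗ T = T ∗ | = T for every tree T and (T₁ ∨ T₂) ∗ (U₁ ∨ U₂) = ((T₁ ∨ T₂) ∗ U₁) ∨ U₂ + T₁ ∨ (T₂ ∗ (U₁ ∨ U₂)) (with ∨ extended bilinearly), is associative: (x ∗ y) ∗ z = x ∗ (y ∗ z) for all elements x, y, z of the free ℤ-module spanned by trees. -/

import Mathlib

/-- The bilinear extension of the grafting `∨` to the free `ℤ`-module spanned by trees. -/
noncomputable def vee (x y : Tree Unit →₀ ℤ) : Tree Unit →₀ ℤ :=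
  x.sum fun T a => y.sum fun U b => Finsupp.single (BinaryTree.node () T U) (a * b)

/-- The convolution product of two trees, with values in the free `ℤ`-module spanned by
trees: `| ∗ T = T ∗ | = T` and
`(T₁ ∨ T₂) ∗ (U₁ ∨ U₂) = ((T₁ ∨ T₂) ∗ U₁) ∨ U₂ + T₁ ∨ (T₂ ∗ (U₁ ∨ U₂))`. -/
noncomputable def starT : Tree Unit → Tree Unit → (Tree Unit →₀ ℤ)
  | BinaryTree.nil, T => Finsupp.single T 1
  | T, BinaryTree.nil => Finsupp.single T 1
  | BinaryTree.node _ T₁ T₂, BinaryTree.node _ U₁ U₂ =>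
      vee (starT (BinaryTree.node () T₁ T₂) U₁) (Finsupp.single U₂ 1) +
        vee (Finsupp.single T₁ 1) (starT T₂ (BinaryTree.node () U₁ U₂))
termination_by x y => (x.numNodes, y.numNodes)
decreasing_by
  · simp [Prod.lex_iff, BinaryTree.numNodes] <;> omega
  · simp [Prod.lex_iff, BinaryTree.numNodes] <;> omega

/-- The bilinear extension of the convolution product `∗` of trees to the free
`ℤ`-module spanned by trees. -/
noncomputable def star (x y : Tree Unit →₀ ℤ) : Tree Unit →₀ ℤ :=
  x.sum fun T a => y.sum fun U b => (a * b) • starT T U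

lemma star_def (x y : Tree Unit →₀ ℤ) :
    star x y = x.sum fun T a => y.sum fun U b => (a * b) • starT T U := rfl

lemma vee_zero_left (y) : vee 0 y = 0 := by simp [vee]
lemma vee_zero_right (x) : vee x 0 = 0 := by simp [vee]
lemma vee_add_left (x x' y) : vee (x + x') y = vee x y + vee x' y := by
  simp only [vee]
  rw [Finsupp.sum_add_index'] <;>
    simp [add_mul, Finsupp.single_add, Finsupp.sum_add]
lemma vee_add_right (x y y') : vee x (y + y') = vee x y + vee x y' := by
  simp only [vee]
  rw [← Finsupp.sum_add]
  refine Finsupp.sum_congr fun T _ => ?_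
  rw [Finsupp.sum_add_index'] <;> simp [mul_add, Finsupp.single_add]
lemma vee_smul_left (a : ℤ) (x y) : vee (a • x) y = a • vee x y := by
  simp only [vee]
  rw [Finsupp.sum_smul_index']
  · simp only [Finsupp.smul_sum, Finsupp.smul_single, smul_eq_mul, mul_assoc]
  · simp
lemma vee_smul_right (a : ℤ) (x y) : vee x (a • y) = a • vee x y := by
  simp only [vee, Finsupp.smul_sum, Finsupp.smul_single, smul_eq_mul]
  refine Finsupp.sum_congr fun T _ => ?_
  rw [Finsupp.sum_smul_index']
  · simp only [smul_eq_mul]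
    exact Finsupp.sum_congr fun U _ => by rw [mul_left_comm]
  · simp
lemma vee_single_single (T U : Tree Unit) :
    vee (Finsupp.single T 1) (Finsupp.single U 1) = Finsupp.single (Tree.node () T U) 1 := by
  simp only [vee]
  rw [Finsupp.sum_single_index, Finsupp.sum_single_index] <;> simp

lemma star_zero_left (y) : star 0 y = 0 := by simp [star_def]
lemma star_zero_right (x) : star x 0 = 0 := by simp [star_def]
lemma star_add_left (x x' y) : star (x + x') y = star x y + star x' y := by
  simp only [star_def]
  rw [Finsupp.sum_add_index'] <;>
    simp [add_mul, add_smul, Finsupp.sum_add]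
lemma star_add_right (x y y') : star x (y + y') = star x y + star x y' := by
  simp only [star_def]
  rw [← Finsupp.sum_add]
  refine Finsupp.sum_congr fun T _ => ?_
  rw [Finsupp.sum_add_index'] <;> simp [mul_add, add_smul]
lemma star_smul_left (a : ℤ) (x y) : star (a • x) y = a • star x y := by
  simp only [star_def]
  rw [Finsupp.sum_smul_index']
  · simp only [Finsupp.smul_sum, smul_smul, smul_eq_mul, mul_assoc]
  · simp
lemma star_smul_right (a : ℤ) (x y) : star x (a • y) = a • star x y := by
  simp only [star_def, Finsupp.smul_sum, smul_smul, smul_eq_mul]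
  refine Finsupp.sum_congr fun T _ => ?_
  rw [Finsupp.sum_smul_index']
  · simp only [smul_eq_mul, smul_smul]
    exact Finsupp.sum_congr fun U _ => by rw [mul_left_comm]
  · simp
lemma star_single_single (T U : Tree Unit) :
    star (Finsupp.single T 1) (Finsupp.single U 1) = starT T U := by
  simp only [star_def]
  rw [Finsupp.sum_single_index, Finsupp.sum_single_index] <;> simp
lemma starT_nil_left (U : Tree Unit) : starT Tree.nil U = Finsupp.single U 1 := by
  simp [starT]
lemma starT_nil_right (T : Tree Unit) : starT T Tree.nil = Finsupp.single T 1 := by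
  cases T <;> simp [starT]
lemma star_nil_left (y : Tree Unit →₀ ℤ) : star (Finsupp.single Tree.nil 1) y = y := by
  simp only [star_def]
  rw [Finsupp.sum_single_index]
  · simp [starT_nil_left, Finsupp.smul_single]
  · simp
lemma star_nil_right (y : Tree Unit →₀ ℤ) : star y (Finsupp.single Tree.nil 1) = y := by
  simp only [star_def]
  conv_rhs => rw [← Finsupp.sum_single y]
  refine Finsupp.sum_congr fun T _ => ?_
  rw [Finsupp.sum_single_index] <;> simp [starT_nil_right, Finsupp.smul_single]
lemma single_eq_smul (T : Tree Unit) (a : ℤ) :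
    Finsupp.single T a = a • Finsupp.single T 1 := by simp [Finsupp.smul_single]

lemma star_node_single (T₁ T₂ U₁ U₂ : Tree Unit) :
    star (vee (Finsupp.single T₁ 1) (Finsupp.single T₂ 1))
        (vee (Finsupp.single U₁ 1) (Finsupp.single U₂ 1)) =
      vee (star (vee (Finsupp.single T₁ 1) (Finsupp.single T₂ 1)) (Finsupp.single U₁ 1))
          (Finsupp.single U₂ 1) +
        vee (Finsupp.single T₁ 1)
          (star (Finsupp.single T₂ 1) (vee (Finsupp.single U₁ 1) (Finsupp.single U₂ 1))) := by
  rw [vee_single_single T₁ T₂, vee_single_single U₁ U₂, star_single_single, star_single_single,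
    star_single_single]
  rw [starT]

lemma star_node (x₁ x₂ y₁ y₂ : Tree Unit →₀ ℤ) :
    star (vee x₁ x₂) (vee y₁ y₂) =
      vee (star (vee x₁ x₂) y₁) y₂ + vee x₁ (star x₂ (vee y₁ y₂)) := by
  induction x₁ using Finsupp.induction_linear with
  | zero => simp [vee_zero_left, vee_zero_right, star_zero_left, star_zero_right]
  | add f g hf hg =>
    simp only [vee_add_left, star_add_left, hf, hg]; abel
  | single T a =>
    induction x₂ using Finsupp.induction_linear with
    | zero => simp [vee_zero_left, vee_zero_right, star_zero_left, star_zero_right]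
    | add f g hf hg =>
      simp only [vee_add_right, star_add_left, vee_add_left, star_add_right, hf, hg]; abel
    | single T' a' =>
      induction y₁ using Finsupp.induction_linear with
      | zero => simp [vee_zero_left, vee_zero_right, star_zero_left, star_zero_right]
      | add f g hf hg =>
        simp only [vee_add_left, star_add_right, vee_add_right, hf, hg]; abel
      | single U b =>
        induction y₂ using Finsupp.induction_linear with
        | zero => simp [vee_zero_left, vee_zero_right, star_zero_left, star_zero_right]
        | add f g hf hg =>
          simp only [vee_add_right, star_add_right, vee_add_left, hf, hg]; abel
        | single U' b' =>
          rw [single_eq_smul T a, single_eq_smul T' a', single_eq_smul U b,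
            single_eq_smul U' b']
          simp only [vee_smul_left, vee_smul_right, star_smul_left, star_smul_right,
            smul_smul, smul_add]
          rw [star_node_single]
          simp only [smul_add, smul_smul]
          module

lemma starT_assoc (T U V : Tree Unit) :
    star (starT T U) (Finsupp.single V 1) = star (Finsupp.single T 1) (starT U V) := by
  suffices H : ∀ n, ∀ T U V : Tree Unit, T.numNodes + U.numNodes + V.numNodes ≤ n →
      star (starT T U) (Finsupp.single V 1) = star (Finsupp.single T 1) (starT U V) from
    H _ T U V le_rfl
  intro n
  induction n using Nat.strong_induction_on with
  | _ n ih =>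
    intro T U V h
    cases T with
    | nil => rw [starT_nil_left, star_single_single, star_nil_left]
    | node uT T₁ T₂ =>
      cases U with
      | nil => rw [starT_nil_right, starT_nil_left, star_single_single]
      | node uU U₁ U₂ =>
        cases V with
        | nil => rw [starT_nil_right, star_nil_right, star_single_single]
        | node uV V₁ V₂ =>
          obtain ⟨⟩ := uT; obtain ⟨⟩ := uU; obtain ⟨⟩ := uV
          simp only [Tree.numNodes, BinaryTree.numNodes] at h
          have ihV₁ := ih (V₁.numNodes + ((Tree.node () T₁ T₂).numNodes +
              (Tree.node () U₁ U₂).numNodes)) (by simp [Tree.numNodes, BinaryTree.numNodes]; omega)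
              (Tree.node () T₁ T₂) (Tree.node () U₁ U₂) V₁ (by simp only [Tree.numNodes]; omega)
          have ihT₂ := ih (T₂.numNodes + ((Tree.node () U₁ U₂).numNodes +
              (Tree.node () V₁ V₂).numNodes)) (by simp [Tree.numNodes, BinaryTree.numNodes]; omega)
              T₂ (Tree.node () U₁ U₂) (Tree.node () V₁ V₂) (by simp only [Tree.numNodes]; omega)
          have hTU : starT (Tree.node () T₁ T₂) (Tree.node () U₁ U₂)
              = vee (starT (Tree.node () T₁ T₂) U₁) (Finsupp.single U₂ 1)
                + vee (Finsupp.single T₁ 1) (starT T₂ (Tree.node () U₁ U₂)) := by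
            simp only [starT]
          have hUV : starT (Tree.node () U₁ U₂) (Tree.node () V₁ V₂)
              = vee (starT (Tree.node () U₁ U₂) V₁) (Finsupp.single V₂ 1)
                + vee (Finsupp.single U₁ 1) (starT U₂ (Tree.node () V₁ V₂)) := by
            simp only [starT]
          have hv1 : star (vee (starT (Tree.node () T₁ T₂) U₁) (Finsupp.single U₂ 1))
                (Finsupp.single V₁ 1)
              + star (vee (Finsupp.single T₁ 1) (starT T₂ (Tree.node () U₁ U₂)))
                (Finsupp.single V₁ 1)
              = star (Finsupp.single (Tree.node () T₁ T₂) 1)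
                  (starT (Tree.node () U₁ U₂) V₁) := by
            rw [← star_add_left, ← hTU]; exact ihV₁
          have hL : star (starT (Tree.node () T₁ T₂) (Tree.node () U₁ U₂))
                (Finsupp.single (Tree.node () V₁ V₂) 1)
              = vee (star (Finsupp.single (Tree.node () T₁ T₂) 1)
                    (starT (Tree.node () U₁ U₂) V₁)) (Finsupp.single V₂ 1)
                + vee (starT (Tree.node () T₁ T₂) U₁) (starT U₂ (Tree.node () V₁ V₂))
                + vee (Finsupp.single T₁ 1)
                    (star (Finsupp.single T₂ 1) (starT (Tree.node () U₁ U₂) (Tree.node () V₁ V₂))) := by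
            rw [hTU, star_add_left, ← vee_single_single V₁ V₂]
            rw [star_node, star_node, vee_single_single V₁ V₂]
            rw [star_single_single U₂, ihT₂]
            rw [← hv1, vee_add_left]
            abel
          have hR : star (Finsupp.single (Tree.node () T₁ T₂) 1)
                (starT (Tree.node () U₁ U₂) (Tree.node () V₁ V₂))
              = vee (star (Finsupp.single (Tree.node () T₁ T₂) 1)
                    (starT (Tree.node () U₁ U₂) V₁)) (Finsupp.single V₂ 1)
                + vee (starT (Tree.node () T₁ T₂) U₁) (starT U₂ (Tree.node () V₁ V₂))
                + vee (Finsupp.single T₁ 1)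
                    (star (Finsupp.single T₂ 1) (starT (Tree.node () U₁ U₂) (Tree.node () V₁ V₂))) := by
            conv_lhs => rw [hUV]
            rw [star_add_right, ← vee_single_single T₁ T₂]
            rw [star_node, star_node, vee_single_single T₁ T₂]
            rw [star_single_single]
            conv_rhs => rw [hUV, star_add_right, vee_add_right]
            abel
          exact hL.trans hR.symm

/-- The convolution product `∗` on the free `ℤ`-module spanned by trees is associative. -/
theorem star_assoc (x y z : Tree Unit →₀ ℤ) :
    star (star x y) z = star x (star y z) := by
  induction x using Finsupp.induction_linear with
  | zero => simp [star_zero_left]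
  | add f g hf hg => simp only [star_add_left, hf, hg]
  | single T a =>
    induction y using Finsupp.induction_linear with
    | zero => simp [star_zero_left, star_zero_right]
    | add f g hf hg => simp only [star_add_left, star_add_right, hf, hg]
    | single U b =>
      induction z using Finsupp.induction_linear with
      | zero => simp [star_zero_right]
      | add f g hf hg => simp only [star_add_right, hf, hg]
      | single V c =>
        rw [single_eq_smul T a, single_eq_smul U b, single_eq_smul V c]
        simp only [star_smul_left, star_smul_right, smul_smul, star_single_single]
        rw [starT_assoc]
        module
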